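/- The ABF interpolation operator Î_{ABF} satisfies the commuting diagram property div(Î_{ABF} v) = Π(div v) for all v ∈ C¹(K̂)², where Π is the L²-projection onto div ABF_k(K̂). -/

import Mathlib

open MeasureTheory
open scoped ENNReal NNReal

noncomputable section

/-- The reference square K̂ = [0,1]². -/
def Khat : Set (ℝ × ℝ) := Set.Icc (0, 0) (1, 1)

/-- Lebesgue measure restricted to K̂. -/
def μK : Measure (ℝ × ℝ) := volume.restrict Khat

/-- Partial derivative in the x-direction. -/
def pdx (w : ℝ × ℝ → ℝ) : ℝ × ℝ → ℝ := fun z => fderiv ℝ w z (1, 0)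

/-- Partial derivative in the y-direction. -/
def pdy (w : ℝ × ℝ → ℝ) : ℝ × ℝ → ℝ := fun z => fderiv ℝ w z (0, 1)

/-- Divergence of a vector field. -/
def divg (u : ℝ × ℝ → ℝ × ℝ) : ℝ × ℝ → ℝ :=
  fun z => (fderiv ℝ u z (1, 0)).1 + (fderiv ℝ u z (0, 1)).2

/-- Bivariate polynomial functions with m coefficients in x and n in y
(i.e. degree < m in x and < n in y); `QfunD 0 n` is the zero space. -/
def QfunD (m n : ℕ) : Set (ℝ × ℝ → ℝ) :=
  {f | ∃ c : Fin m → Fin n → ℝ,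
    ∀ x y : ℝ, f (x, y) = ∑ i, ∑ j, c i j * x ^ (i : ℕ) * y ^ (j : ℕ)}

/-- Bivariate polynomial functions of degree ≤ p in x and ≤ q in y. -/
def Qpoly (p q : ℕ) : Set (ℝ × ℝ → ℝ) := QfunD (p + 1) (q + 1)

/-- Univariate polynomial functions of degree ≤ k. -/
def P1fun (k : ℕ) : Set (ℝ → ℝ) :=
  {g | ∃ c : Fin (k + 1) → ℝ, ∀ t, g t = ∑ i, c i * t ^ (i : ℕ)}

/-- Bivariate polynomial functions of total degree ≤ k. -/
def Pfun (k : ℕ) : Set (ℝ × ℝ → ℝ) :=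
  {f | ∃ c : Fin (k + 1) → Fin (k + 1) → ℝ,
    (∀ i j : Fin (k + 1), k < (i : ℕ) + (j : ℕ) → c i j = 0) ∧
    ∀ x y : ℝ, f (x, y) = ∑ i, ∑ j, c i j * x ^ (i : ℕ) * y ^ (j : ℕ)}

/-- The W^{m,p} Sobolev-type norm built from classical partial derivatives. -/
def SobNorm (m : ℕ) (p : ℝ≥0∞) (μ : Measure (ℝ × ℝ)) (w : ℝ × ℝ → ℝ) : ℝ≥0∞ :=
  ∑ a ∈ Finset.range (m + 1), ∑ b ∈ Finset.range (m + 1 - a),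
    eLpNorm (pdx^[a] (pdy^[b] w)) p μ

/-- div ABF_k(K̂) = Q_{k+1}(K̂) \ span{x^{k+1}y^{k+1}}: polynomials of degree ≤ k+1 in
each variable whose x^{k+1}y^{k+1}-coefficient vanishes. -/
def ABFdivFun (k : ℕ) : Set (ℝ × ℝ → ℝ) :=
  {f | ∃ c : Fin (k + 2) → Fin (k + 2) → ℝ, c (Fin.last (k + 1)) (Fin.last (k + 1)) = 0 ∧
    ∀ x y : ℝ, f (x, y) = ∑ i, ∑ j, c i j * x ^ (i : ℕ) * y ^ (j : ℕ)}

/-! ### Auxiliary lemmas -/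

/-- The monomial `x^i y^j` as a function on `ℝ × ℝ`. -/
def mono (i j : ℕ) : ℝ × ℝ → ℝ := fun z => z.1 ^ i * z.2 ^ j

lemma hasFDerivAt_mono (i j : ℕ) (z : ℝ × ℝ) :
    HasFDerivAt (mono i j)
      (z.1 ^ i • ((j : ℝ) * z.2 ^ (j - 1)) • ContinuousLinearMap.snd ℝ ℝ ℝ +
       z.2 ^ j • ((i : ℝ) * z.1 ^ (i - 1)) • ContinuousLinearMap.fst ℝ ℝ ℝ) z := by
  have hx : HasFDerivAt (fun w : ℝ × ℝ => w.1 ^ i)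
      (((i : ℝ) * z.1 ^ (i - 1)) • ContinuousLinearMap.fst ℝ ℝ ℝ) z :=
    (hasDerivAt_pow i z.1).comp_hasFDerivAt z hasFDerivAt_fst
  have hy : HasFDerivAt (fun w : ℝ × ℝ => w.2 ^ j)
      (((j : ℝ) * z.2 ^ (j - 1)) • ContinuousLinearMap.snd ℝ ℝ ℝ) z :=
    (hasDerivAt_pow j z.2).comp_hasFDerivAt z hasFDerivAt_snd
  exact hx.mul hy

lemma contDiff_mono (i j : ℕ) : ContDiff ℝ 1 (mono i j) :=
  (contDiff_fst.pow i).mul (contDiff_snd.pow j)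

lemma pdx_mono (i j : ℕ) (z : ℝ × ℝ) :
    pdx (mono i j) z = (i : ℝ) * z.1 ^ (i - 1) * z.2 ^ j := by
  show fderiv ℝ (mono i j) z (1, 0) = _
  rw [(hasFDerivAt_mono i j z).fderiv]; simp; ring

lemma pdy_mono (i j : ℕ) (z : ℝ × ℝ) :
    pdy (mono i j) z = (j : ℝ) * z.1 ^ i * z.2 ^ (j - 1) := by
  show fderiv ℝ (mono i j) z (0, 1) = _
  rw [(hasFDerivAt_mono i j z).fderiv]; simp; ring

/-- Polynomial function attached to a coefficient matrix. -/
def Pfn {m n : ℕ} (c : Fin m → Fin n → ℝ) : ℝ × ℝ → ℝ :=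
  fun z => ∑ i, ∑ j, c i j * mono (i : ℕ) (j : ℕ) z

lemma Pfn_apply {m n : ℕ} (c : Fin m → Fin n → ℝ) (x y : ℝ) :
    Pfn c (x, y) = ∑ i, ∑ j, c i j * x ^ (i : ℕ) * y ^ (j : ℕ) := by
  simp [Pfn, mono, mul_assoc]

lemma contDiff_Pfn {m n : ℕ} (c : Fin m → Fin n → ℝ) : ContDiff ℝ 1 (Pfn c) := by
  apply ContDiff.sum; intro i _; apply ContDiff.sum; intro j _
  exact contDiff_const.mul ((contDiff_fst.pow _).mul (contDiff_snd.pow _))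

lemma hasFDerivAt_Pfn {m n : ℕ} (c : Fin m → Fin n → ℝ) (z : ℝ × ℝ) :
    HasFDerivAt (Pfn c) (∑ i : Fin m, ∑ j : Fin n, c i j •
      (z.1 ^ (i : ℕ) • (((j : ℕ) : ℝ) * z.2 ^ ((j : ℕ) - 1)) • ContinuousLinearMap.snd ℝ ℝ ℝ +
       z.2 ^ (j : ℕ) • (((i : ℕ) : ℝ) * z.1 ^ ((i : ℕ) - 1)) • ContinuousLinearMap.fst ℝ ℝ ℝ)) z :=
  HasFDerivAt.fun_sum fun i _ => HasFDerivAt.fun_sum fun j _ =>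
    (hasFDerivAt_mono (i : ℕ) (j : ℕ) z).const_mul (c i j)

lemma pdx_Pfn {m n : ℕ} (c : Fin m → Fin n → ℝ) (z : ℝ × ℝ) :
    pdx (Pfn c) z = ∑ i : Fin m, ∑ j : Fin n,
      c i j * (((i : ℕ) : ℝ) * z.1 ^ ((i : ℕ) - 1) * z.2 ^ (j : ℕ)) := by
  show fderiv ℝ (Pfn c) z (1, 0) = _
  rw [(hasFDerivAt_Pfn c z).fderiv]
  simp only [ContinuousLinearMap.coe_sum', Finset.sum_apply, ContinuousLinearMap.coe_smul',
    Pi.smul_apply, ContinuousLinearMap.add_apply, ContinuousLinearMap.coe_fst',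
    ContinuousLinearMap.coe_snd', smul_eq_mul]
  exact Finset.sum_congr rfl fun i _ => Finset.sum_congr rfl fun j _ => by ring

lemma pdy_Pfn {m n : ℕ} (c : Fin m → Fin n → ℝ) (z : ℝ × ℝ) :
    pdy (Pfn c) z = ∑ i : Fin m, ∑ j : Fin n,
      c i j * (((j : ℕ) : ℝ) * z.1 ^ (i : ℕ) * z.2 ^ ((j : ℕ) - 1)) := by
  show fderiv ℝ (Pfn c) z (0, 1) = _
  rw [(hasFDerivAt_Pfn c z).fderiv]
  simp only [ContinuousLinearMap.coe_sum', Finset.sum_apply, ContinuousLinearMap.coe_smul',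
    Pi.smul_apply, ContinuousLinearMap.add_apply, ContinuousLinearMap.coe_fst',
    ContinuousLinearMap.coe_snd', smul_eq_mul]
  exact Finset.sum_congr rfl fun i _ => Finset.sum_congr rfl fun j _ => by ring

lemma divg_pair (f g : ℝ × ℝ → ℝ) (hf : Differentiable ℝ f) (hg : Differentiable ℝ g)
    (z : ℝ × ℝ) : divg (fun w => (f w, g w)) z = pdx f z + pdy g z := by
  have h : HasFDerivAt (fun w => (f w, g w)) ((fderiv ℝ f z).prod (fderiv ℝ g z)) z :=
    ((hf z).hasFDerivAt).prodMk ((hg z).hasFDerivAt)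
  show (fderiv ℝ (fun w => (f w, g w)) z (1, 0)).1 +
    (fderiv ℝ (fun w => (f w, g w)) z (0, 1)).2 = _
  rw [h.fderiv]; rfl

lemma pdx_mul {f g : ℝ × ℝ → ℝ} {z : ℝ × ℝ} (hf : DifferentiableAt ℝ f z)
    (hg : DifferentiableAt ℝ g z) :
    pdx (fun w => f w * g w) z = pdx f z * g z + f z * pdx g z := by
  show fderiv ℝ (fun w => f w * g w) z (1, 0) = _
  rw [fderiv_fun_mul hf hg]; simp [pdx]; ring

lemma pdy_mul {f g : ℝ × ℝ → ℝ} {z : ℝ × ℝ} (hf : DifferentiableAt ℝ f z)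
    (hg : DifferentiableAt ℝ g z) :
    pdy (fun w => f w * g w) z = pdy f z * g z + f z * pdy g z := by
  show fderiv ℝ (fun w => f w * g w) z (0, 1) = _
  rw [fderiv_fun_mul hf hg]; simp [pdy]; ring

lemma pdx_sub {f g : ℝ × ℝ → ℝ} {z : ℝ × ℝ} (hf : DifferentiableAt ℝ f z)
    (hg : DifferentiableAt ℝ g z) :
    pdx (fun w => f w - g w) z = pdx f z - pdx g z := by
  show fderiv ℝ (fun w => f w - g w) z (1, 0) = _
  rw [fderiv_fun_sub hf hg]; rfl

lemma pdy_sub {f g : ℝ × ℝ → ℝ} {z : ℝ × ℝ} (hf : DifferentiableAt ℝ f z)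
    (hg : DifferentiableAt ℝ g z) :
    pdy (fun w => f w - g w) z = pdy f z - pdy g z := by
  show fderiv ℝ (fun w => f w - g w) z (0, 1) = _
  rw [fderiv_fun_sub hf hg]; rfl

lemma continuous_pdx {F : ℝ × ℝ → ℝ} (hF : ContDiff ℝ 1 F) : Continuous (pdx F) :=
  (ContinuousLinearMap.apply ℝ ℝ ((1:ℝ), (0:ℝ))).continuous.comp (hF.continuous_fderiv one_ne_zero)

lemma continuous_pdy {F : ℝ × ℝ → ℝ} (hF : ContDiff ℝ 1 F) : Continuous (pdy F) :=
  (ContinuousLinearMap.apply ℝ ℝ ((0:ℝ), (1:ℝ))).continuous.comp (hF.continuous_fderiv one_ne_zero)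

lemma continuous_divg {u : ℝ × ℝ → ℝ × ℝ} (hu : ContDiff ℝ 1 u) : Continuous (divg u) := by
  have h1 := hu.continuous_fderiv one_ne_zero
  exact ((continuous_fst.comp ((ContinuousLinearMap.apply ℝ (ℝ × ℝ)
      ((1:ℝ), (0:ℝ))).continuous.comp h1)).add
    (continuous_snd.comp ((ContinuousLinearMap.apply ℝ (ℝ × ℝ)
      ((0:ℝ), (1:ℝ))).continuous.comp h1)))

lemma Khat_eq : Khat = Set.Icc (0:ℝ) 1 ×ˢ Set.Icc (0:ℝ) 1 := by
  rw [Khat, Set.Icc_prod_eq]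

lemma integrableOn_Khat {f : ℝ × ℝ → ℝ} (hf : Continuous f) : IntegrableOn f Khat volume :=
  hf.continuousOn.integrableOn_compact' isCompact_Icc measurableSet_Icc

lemma integrable_μK {f : ℝ × ℝ → ℝ} (hf : Continuous f) : Integrable f μK :=
  integrableOn_Khat hf

lemma μK_prod :
    μK = (volume.restrict (Set.Icc (0:ℝ) 1)).prod (volume.restrict (Set.Icc (0:ℝ) 1)) := by
  rw [μK, Khat_eq, Measure.prod_restrict, Measure.volume_eq_prod]

lemma integral_pdx (F : ℝ × ℝ → ℝ) (hF : ContDiff ℝ 1 F) :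
    ∫ z, pdx F z ∂μK = ∫ y in (0:ℝ)..1, (F (1, y) - F (0, y)) := by
  have hcont : Continuous (pdx F) := continuous_pdx hF
  have hint : Integrable (pdx F)
      ((volume.restrict (Set.Icc (0:ℝ) 1)).prod (volume.restrict (Set.Icc (0:ℝ) 1))) := by
    rw [Measure.prod_restrict, ← Measure.volume_eq_prod, ← Khat_eq]
    exact integrableOn_Khat hcont
  rw [μK_prod, integral_prod_symm _ hint]
  have inner : ∀ y : ℝ, ∫ x in Set.Icc (0:ℝ) 1, pdx F (x, y) = F (1, y) - F (0, y) := by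
    intro y
    have hd : ∀ x : ℝ, HasDerivAt (fun t => F (t, y)) (pdx F (x, y)) x := by
      intro x
      have hc : HasDerivAt (fun t : ℝ => (t, y)) ((1:ℝ), (0:ℝ)) x :=
        (hasDerivAt_id x).prodMk (hasDerivAt_const x y)
      exact (hF.differentiable one_ne_zero (x, y)).hasFDerivAt.comp_hasDerivAt x hc
    have key : ∫ x in (0:ℝ)..1, pdx F (x, y) = F (1, y) - F (0, y) := by
      have h2 := intervalIntegral.integral_deriv_eq_sub (f := fun t => F (t, y)) (a := 0) (b := 1)
        (fun x _ => (hd x).differentiableAt) ?_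
      · rw [← h2]
        exact intervalIntegral.integral_congr fun x _ => ((hd x).deriv).symm
      · apply Continuous.intervalIntegrable
        have hc2 : Continuous fun x : ℝ => pdx F (x, y) :=
          hcont.comp (continuous_id.prodMk continuous_const)
        exact hc2.congr fun x => ((hd x).deriv).symm
    rw [integral_Icc_eq_integral_Ioc, ← intervalIntegral.integral_of_le (by norm_num : (0:ℝ) ≤ 1)]
    exact key
  rw [intervalIntegral.integral_of_le (by norm_num : (0:ℝ) ≤ 1), ← integral_Icc_eq_integral_Ioc]
  exact setIntegral_congr_fun measurableSet_Icc fun y _ => inner y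

lemma integral_pdy (F : ℝ × ℝ → ℝ) (hF : ContDiff ℝ 1 F) :
    ∫ z, pdy F z ∂μK = ∫ x in (0:ℝ)..1, (F (x, 1) - F (x, 0)) := by
  have hcont : Continuous (pdy F) := continuous_pdy hF
  have hint : Integrable (pdy F)
      ((volume.restrict (Set.Icc (0:ℝ) 1)).prod (volume.restrict (Set.Icc (0:ℝ) 1))) := by
    rw [Measure.prod_restrict, ← Measure.volume_eq_prod, ← Khat_eq]
    exact integrableOn_Khat hcont
  rw [μK_prod, integral_prod _ hint]
  have inner : ∀ x : ℝ, ∫ y in Set.Icc (0:ℝ) 1, pdy F (x, y) = F (x, 1) - F (x, 0) := by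
    intro x
    have hd : ∀ y : ℝ, HasDerivAt (fun t => F (x, t)) (pdy F (x, y)) y := by
      intro y
      have hc : HasDerivAt (fun t : ℝ => (x, t)) ((0:ℝ), (1:ℝ)) y :=
        (hasDerivAt_const y x).prodMk (hasDerivAt_id y)
      exact (hF.differentiable one_ne_zero (x, y)).hasFDerivAt.comp_hasDerivAt y hc
    have key : ∫ y in (0:ℝ)..1, pdy F (x, y) = F (x, 1) - F (x, 0) := by
      have h2 := intervalIntegral.integral_deriv_eq_sub (f := fun t => F (x, t)) (a := 0) (b := 1)
        (fun y _ => (hd y).differentiableAt) ?_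
      · rw [← h2]
        exact intervalIntegral.integral_congr fun y _ => ((hd y).deriv).symm
      · apply Continuous.intervalIntegrable
        have hc2 : Continuous fun y : ℝ => pdy F (x, y) :=
          hcont.comp (continuous_const.prodMk continuous_id)
        exact hc2.congr fun y => ((hd y).deriv).symm
    rw [integral_Icc_eq_integral_Ioc, ← intervalIntegral.integral_of_le (by norm_num : (0:ℝ) ≤ 1)]
    exact key
  rw [intervalIntegral.integral_of_le (by norm_num : (0:ℝ) ≤ 1), ← integral_Icc_eq_integral_Ioc]
  exact setIntegral_congr_fun measurableSet_Icc fun x _ => inner x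

lemma sum_single2 {m n : ℕ} (i : Fin m) (j : Fin n) (r : ℝ) (x y : ℝ) :
    ∑ a : Fin m, ∑ b : Fin n, (if a = i ∧ b = j then r else 0) * x ^ (a : ℕ) * y ^ (b : ℕ)
      = r * x ^ (i : ℕ) * y ^ (j : ℕ) := by
  rw [Fintype.sum_eq_single i]
  · rw [Fintype.sum_eq_single j] <;> simp +contextual
  · intro a ha
    apply Finset.sum_eq_zero
    intro b _
    simp [ha]

lemma mul_mono_mem_QfunD {m n : ℕ} (a b : ℕ) (r : ℝ) (ha : a < m) (hb : b < n) :
    (fun z : ℝ × ℝ => r * z.1 ^ a * z.2 ^ b) ∈ QfunD m n := by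
  refine ⟨fun i j => if i = ⟨a, ha⟩ ∧ j = ⟨b, hb⟩ then r else 0, fun x y => ?_⟩
  exact (sum_single2 ⟨a, ha⟩ ⟨b, hb⟩ r x y).symm

lemma zero_mem_QfunD (m n : ℕ) : (fun _ : ℝ × ℝ => (0:ℝ)) ∈ QfunD m n :=
  ⟨0, by simp⟩

lemma pow_mem_P1fun (k j : ℕ) (hj : j ≤ k) : (fun t : ℝ => t ^ j) ∈ P1fun k := by
  refine ⟨fun b => if b = ⟨j, by omega⟩ then 1 else 0, fun t => ?_⟩
  rw [Fintype.sum_eq_single (⟨j, by omega⟩ : Fin (k + 1)) (fun b hb => by simp [hb])]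
  simp

/-- The Arnold–Boffi–Falk interpolation operator, defined by its edge, interior and
divergence moments, satisfies the commuting diagram property
div(Î_{ABF} v) = Π(div v), where Π is the L²-projection onto div ABF_k(K̂). -/
theorem ABF_commuting_diagram (k : ℕ)
    (I : (ℝ × ℝ → ℝ × ℝ) → (ℝ × ℝ → ℝ × ℝ))
    (Pr : (ℝ × ℝ → ℝ) → (ℝ × ℝ → ℝ))
    (hPrmem : ∀ w, Pr w ∈ ABFdivFun k)
    (hProrth : ∀ w, MemLp w 2 μK → ∀ q ∈ ABFdivFun k, ∫ z, (w z - Pr w z) * q z ∂μK = 0)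
    (v : ℝ × ℝ → ℝ × ℝ) (hv : ContDiff ℝ 1 v)
    -- Î_{ABF} v belongs to ABF_k(K̂) = Q_{k+2,k} × Q_{k,k+2}:
    (hIv1 : (fun z => (I v z).1) ∈ Qpoly (k + 2) k)
    (hIv2 : (fun z => (I v z).2) ∈ Qpoly k (k + 2))
    -- edge moments: ∫_F (Î_{ABF}v − v)·n q = 0 for all q ∈ P_k(F) on each edge F:
    (hedge : ∀ g ∈ P1fun k,
      (∫ t in (0:ℝ)..1, ((I v (0, t)).1 - (v (0, t)).1) * g t) = 0 ∧
      (∫ t in (0:ℝ)..1, ((I v (1, t)).1 - (v (1, t)).1) * g t) = 0 ∧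
      (∫ t in (0:ℝ)..1, ((I v (t, 0)).2 - (v (t, 0)).2) * g t) = 0 ∧
      (∫ t in (0:ℝ)..1, ((I v (t, 1)).2 - (v (t, 1)).2) * g t) = 0)
    -- interior moments against Q_{k-1,k} × Q_{k,k-1}:
    (hint : ∀ q₁ ∈ QfunD k (k + 1), ∀ q₂ ∈ QfunD (k + 1) k,
      ∫ z, (((I v z).1 - (v z).1) * q₁ z + ((I v z).2 - (v z).2) * q₂ z) ∂μK = 0)
    -- divergence moments against x^i y^{k+1}, 0 ≤ i ≤ k:
    (hdiv1 : ∀ i : Fin (k + 1),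
      ∫ z, (divg (I v) z - divg v z) * (z.1 ^ (i : ℕ) * z.2 ^ (k + 1)) ∂μK = 0)
    -- divergence moments against x^{k+1} y^j, 0 ≤ j ≤ k:
    (hdiv2 : ∀ j : Fin (k + 1),
      ∫ z, (divg (I v) z - divg v z) * (z.1 ^ (k + 1) * z.2 ^ (j : ℕ)) ∂μK = 0) :
    divg (I v) =ᵐ[μK] Pr (divg v) := by
  classical
  obtain ⟨c₁, hc₁⟩ := hIv1
  obtain ⟨c₂, hc₂⟩ := hIv2
  have hI1 : (fun z : ℝ × ℝ => (I v z).1) = Pfn c₁ := by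
    funext z; obtain ⟨x, y⟩ := z; rw [Pfn_apply]; exact hc₁ x y
  have hI2 : (fun z : ℝ × ℝ => (I v z).2) = Pfn c₂ := by
    funext z; obtain ⟨x, y⟩ := z; rw [Pfn_apply]; exact hc₂ x y
  have hI1' : ∀ z : ℝ × ℝ, (I v z).1 = Pfn c₁ z := fun z => congrFun hI1 z
  have hI2' : ∀ z : ℝ × ℝ, (I v z).2 = Pfn c₂ z := fun z => congrFun hI2 z
  have hIpair : I v = fun w => (Pfn c₁ w, Pfn c₂ w) := by
    funext w; exact Prod.ext (hI1' w) (hI2' w)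
  have hPfn1C := contDiff_Pfn c₁
  have hPfn2C := contDiff_Pfn c₂
  have hIvC : ContDiff ℝ 1 (I v) := by rw [hIpair]; exact hPfn1C.prodMk hPfn2C
  have hdivIv : ∀ z, divg (I v) z = pdx (Pfn c₁) z + pdy (Pfn c₂) z := by
    intro z; rw [hIpair]
    exact divg_pair _ _ (hPfn1C.differentiable one_ne_zero) (hPfn2C.differentiable one_ne_zero) z
  have hv1 : ContDiff ℝ 1 (fun z : ℝ × ℝ => (v z).1) := hv.fst
  have hv2 : ContDiff ℝ 1 (fun z : ℝ × ℝ => (v z).2) := hv.snd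
  have hdivv : ∀ z, divg v z = pdx (fun z : ℝ × ℝ => (v z).1) z
      + pdy (fun z : ℝ × ℝ => (v z).2) z := fun z =>
    divg_pair _ _ (hv1.differentiable one_ne_zero) (hv2.differentiable one_ne_zero) z
  have he1 : (fun z : ℝ × ℝ => (I v z).1 - (v z).1) = fun z => Pfn c₁ z - (v z).1 := by
    funext z; rw [hI1' z]
  have he2 : (fun z : ℝ × ℝ => (I v z).2 - (v z).2) = fun z => Pfn c₂ z - (v z).2 := by
    funext z; rw [hI2' z]
  have hu1C : ContDiff ℝ 1 (fun z : ℝ × ℝ => (I v z).1 - (v z).1) := by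
    rw [he1]; exact hPfn1C.sub hv1
  have hu2C : ContDiff ℝ 1 (fun z : ℝ × ℝ => (I v z).2 - (v z).2) := by
    rw [he2]; exact hPfn2C.sub hv2
  have hu1cont := hu1C.continuous
  have hu2cont := hu2C.continuous
  have hdiff : ∀ z, divg (I v) z - divg v z
      = pdx (fun w => (I v w).1 - (v w).1) z + pdy (fun w => (I v w).2 - (v w).2) z := by
    intro z
    have e1 : pdx (fun w => (I v w).1 - (v w).1) z
        = pdx (Pfn c₁) z - pdx (fun z : ℝ × ℝ => (v z).1) z := by
      rw [he1]
      exact pdx_sub (hPfn1C.differentiable one_ne_zero z) (hv1.differentiable one_ne_zero z)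
    have e2 : pdy (fun w => (I v w).2 - (v w).2) z
        = pdy (Pfn c₂) z - pdy (fun z : ℝ × ℝ => (v z).2) z := by
      rw [he2]
      exact pdy_sub (hPfn2C.differentiable one_ne_zero z) (hv2.differentiable one_ne_zero z)
    rw [hdivIv z, hdivv z, e1, e2]; ring
  -- Key step: orthogonality against Q_k monomials via integration by parts
  have key : ∀ i j : ℕ, i ≤ k → j ≤ k →
      ∫ z, (divg (I v) z - divg v z) * mono i j z ∂μK = 0 := by
    intro i j hi hj
    have hmC : ContDiff ℝ 1 (mono i j) := contDiff_mono i j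
    have hmcont : Continuous (mono i j) := hmC.continuous
    have hF1C : ContDiff ℝ 1 (fun z : ℝ × ℝ => ((I v z).1 - (v z).1) * mono i j z) :=
      hu1C.mul hmC
    have hF2C : ContDiff ℝ 1 (fun z : ℝ × ℝ => ((I v z).2 - (v z).2) * mono i j z) :=
      hu2C.mul hmC
    have hpt : ∀ z, (divg (I v) z - divg v z) * mono i j z
        = (pdx (fun z : ℝ × ℝ => ((I v z).1 - (v z).1) * mono i j z) z
            - ((I v z).1 - (v z).1) * pdx (mono i j) z)
          + (pdy (fun z : ℝ × ℝ => ((I v z).2 - (v z).2) * mono i j z) z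
            - ((I v z).2 - (v z).2) * pdy (mono i j) z) := by
      intro z
      have p1 := pdx_mul (f := fun w => (I v w).1 - (v w).1) (g := mono i j)
        (hu1C.differentiable one_ne_zero z) (hmC.differentiable one_ne_zero z)
      have p2 := pdy_mul (f := fun w => (I v w).2 - (v w).2) (g := mono i j)
        (hu2C.differentiable one_ne_zero z) (hmC.differentiable one_ne_zero z)
      rw [hdiff z, p1, p2]; ring
    have hA : ∫ z, pdx (fun z : ℝ × ℝ => ((I v z).1 - (v z).1) * mono i j z) z ∂μK = 0 := by
      rw [integral_pdx _ hF1C]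
      have hb1 : (∫ y in (0:ℝ)..1, ((I v (1, y)).1 - (v (1, y)).1) * mono i j (1, y)) = 0 := by
        have hg := (hedge (fun t => t ^ j) (pow_mem_P1fun k j hj)).2.1
        have e : (∫ y in (0:ℝ)..1, ((I v (1, y)).1 - (v (1, y)).1) * mono i j (1, y))
            = ∫ t in (0:ℝ)..1, ((I v (1, t)).1 - (v (1, t)).1) * t ^ j :=
          intervalIntegral.integral_congr fun y _ => by simp [mono]
        rw [e, hg]
      have hb0 : (∫ y in (0:ℝ)..1, ((I v (0, y)).1 - (v (0, y)).1) * mono i j (0, y)) = 0 := by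
        have hg := (hedge (fun t => t ^ j) (pow_mem_P1fun k j hj)).1
        have e : (∫ y in (0:ℝ)..1, ((I v (0, y)).1 - (v (0, y)).1) * mono i j (0, y))
            = (0:ℝ) ^ i * ∫ y in (0:ℝ)..1, ((I v (0, y)).1 - (v (0, y)).1) * y ^ j := by
          rw [← intervalIntegral.integral_const_mul]
          exact intervalIntegral.integral_congr fun y _ => by simp [mono]; ring
        rw [e, hg, mul_zero]
      have i1 : IntervalIntegrable
          (fun y => ((I v (1, y)).1 - (v (1, y)).1) * mono i j (1, y)) volume 0 1 :=
        ((hu1cont.mul hmcont).comp (continuous_const.prodMk continuous_id)).intervalIntegrable 0 1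
      have i0 : IntervalIntegrable
          (fun y => ((I v (0, y)).1 - (v (0, y)).1) * mono i j (0, y)) volume 0 1 :=
        ((hu1cont.mul hmcont).comp (continuous_const.prodMk continuous_id)).intervalIntegrable 0 1
      rw [intervalIntegral.integral_sub i1 i0, hb1, hb0, sub_zero]
    have hB : ∫ z, pdy (fun z : ℝ × ℝ => ((I v z).2 - (v z).2) * mono i j z) z ∂μK = 0 := by
      rw [integral_pdy _ hF2C]
      have hb1 : (∫ x in (0:ℝ)..1, ((I v (x, 1)).2 - (v (x, 1)).2) * mono i j (x, 1)) = 0 := by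
        have hg := (hedge (fun t => t ^ i) (pow_mem_P1fun k i hi)).2.2.2
        have e : (∫ x in (0:ℝ)..1, ((I v (x, 1)).2 - (v (x, 1)).2) * mono i j (x, 1))
            = ∫ t in (0:ℝ)..1, ((I v (t, 1)).2 - (v (t, 1)).2) * t ^ i :=
          intervalIntegral.integral_congr fun x _ => by simp [mono]
        rw [e, hg]
      have hb0 : (∫ x in (0:ℝ)..1, ((I v (x, 0)).2 - (v (x, 0)).2) * mono i j (x, 0)) = 0 := by
        have hg := (hedge (fun t => t ^ i) (pow_mem_P1fun k i hi)).2.2.1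
        have e : (∫ x in (0:ℝ)..1, ((I v (x, 0)).2 - (v (x, 0)).2) * mono i j (x, 0))
            = (0:ℝ) ^ j * ∫ x in (0:ℝ)..1, ((I v (x, 0)).2 - (v (x, 0)).2) * x ^ i := by
          rw [← intervalIntegral.integral_const_mul]
          exact intervalIntegral.integral_congr fun x _ => by simp [mono]; ring
        rw [e, hg, mul_zero]
      have i1 : IntervalIntegrable
          (fun x => ((I v (x, 1)).2 - (v (x, 1)).2) * mono i j (x, 1)) volume 0 1 :=
        ((hu2cont.mul hmcont).comp (continuous_id.prodMk continuous_const)).intervalIntegrable 0 1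
      have i0 : IntervalIntegrable
          (fun x => ((I v (x, 0)).2 - (v (x, 0)).2) * mono i j (x, 0)) volume 0 1 :=
        ((hu2cont.mul hmcont).comp (continuous_id.prodMk continuous_const)).intervalIntegrable 0 1
      rw [intervalIntegral.integral_sub i1 i0, hb1, hb0, sub_zero]
    have hCx : ∫ z, ((I v z).1 - (v z).1) * pdx (mono i j) z ∂μK = 0 := by
      have hq₁ : (fun z : ℝ × ℝ => (i:ℝ) * z.1 ^ (i - 1) * z.2 ^ j) ∈ QfunD k (k + 1) := by
        rcases Nat.eq_zero_or_pos i with h0 | hpos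
        · subst h0; exact ⟨0, by simp⟩
        · exact mul_mono_mem_QfunD (i - 1) j _ (by omega) (by omega)
      have h := hint _ hq₁ _ (zero_mem_QfunD (k + 1) k)
      simp only [mul_zero, add_zero] at h
      rw [← h]
      refine integral_congr_ae (Filter.Eventually.of_forall fun z => ?_)
      show ((I v z).1 - (v z).1) * pdx (mono i j) z
        = ((I v z).1 - (v z).1) * ((i:ℝ) * z.1 ^ (i - 1) * z.2 ^ j)
      rw [pdx_mono]
    have hCy : ∫ z, ((I v z).2 - (v z).2) * pdy (mono i j) z ∂μK = 0 := by
      have hq₂ : (fun z : ℝ × ℝ => (j:ℝ) * z.1 ^ i * z.2 ^ (j - 1)) ∈ QfunD (k + 1) k := by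
        rcases Nat.eq_zero_or_pos j with h0 | hpos
        · subst h0; exact ⟨0, by simp⟩
        · exact mul_mono_mem_QfunD i (j - 1) _ (by omega) (by omega)
      have h := hint _ (zero_mem_QfunD k (k + 1)) _ hq₂
      simp only [mul_zero, zero_add] at h
      rw [← h]
      refine integral_congr_ae (Filter.Eventually.of_forall fun z => ?_)
      show ((I v z).2 - (v z).2) * pdy (mono i j) z
        = ((I v z).2 - (v z).2) * ((j:ℝ) * z.1 ^ i * z.2 ^ (j - 1))
      rw [pdy_mono]
    have ia1 : Integrable (fun z => pdx (fun z : ℝ × ℝ => ((I v z).1 - (v z).1) * mono i j z) z) μK :=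
      integrable_μK (continuous_pdx hF1C)
    have ia2 : Integrable (fun z => ((I v z).1 - (v z).1) * pdx (mono i j) z) μK :=
      integrable_μK (hu1cont.mul (continuous_pdx hmC))
    have ib1 : Integrable (fun z => pdy (fun z : ℝ × ℝ => ((I v z).2 - (v z).2) * mono i j z) z) μK :=
      integrable_μK (continuous_pdy hF2C)
    have ib2 : Integrable (fun z => ((I v z).2 - (v z).2) * pdy (mono i j) z) μK :=
      integrable_μK (hu2cont.mul (continuous_pdy hmC))
    have iaa : Integrable (fun z => pdx (fun z : ℝ × ℝ => ((I v z).1 - (v z).1) * mono i j z) z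
        - ((I v z).1 - (v z).1) * pdx (mono i j) z) μK := ia1.sub ia2
    have ibb : Integrable (fun z => pdy (fun z : ℝ × ℝ => ((I v z).2 - (v z).2) * mono i j z) z
        - ((I v z).2 - (v z).2) * pdy (mono i j) z) μK := ib1.sub ib2
    rw [integral_congr_ae (Filter.Eventually.of_forall hpt), integral_add iaa ibb,
      integral_sub ia1 ia2, integral_sub ib1 ib2, hA, hB, hCx, hCy]
    ring
  -- divg (I v) is a polynomial in Q_{k+1} with vanishing top coefficient
  set d : Fin (k + 2) → Fin (k + 2) → ℝ := fun a b =>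
    (if hb : (b : ℕ) < k + 1 then ((a : ℕ) + 1 : ℝ) * c₁ a.succ ⟨(b : ℕ), hb⟩ else 0)
    + (if ha : (a : ℕ) < k + 1 then ((b : ℕ) + 1 : ℝ) * c₂ ⟨(a : ℕ), ha⟩ b.succ else 0) with hd
  have hdlast : d (Fin.last (k + 1)) (Fin.last (k + 1)) = 0 := by
    simp [hd, Fin.val_last]
  have hApoly : ∀ x y : ℝ, pdx (Pfn c₁) (x, y)
      = ∑ a : Fin (k + 2), ∑ b : Fin (k + 2),
        (if hb : (b : ℕ) < k + 1 then ((a : ℕ) + 1 : ℝ) * c₁ a.succ ⟨(b : ℕ), hb⟩ else 0)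
          * x ^ (a : ℕ) * y ^ (b : ℕ) := by
    intro x y
    have hR : ∀ a : Fin (k + 2), (∑ b : Fin (k + 2),
        (if hb : (b : ℕ) < k + 1 then ((a : ℕ) + 1 : ℝ) * c₁ a.succ ⟨(b : ℕ), hb⟩ else 0)
          * x ^ (a : ℕ) * y ^ (b : ℕ))
        = ∑ b : Fin (k + 1), ((a : ℕ) + 1 : ℝ) * c₁ a.succ b * x ^ (a : ℕ) * y ^ (b : ℕ) := by
      intro a
      rw [Fin.sum_univ_castSucc]
      simp [Fin.is_lt, Fin.is_le]
    rw [pdx_Pfn]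
    calc (∑ i : Fin (k + 2 + 1), ∑ j : Fin (k + 1),
          c₁ i j * (((i : ℕ) : ℝ) * (x, y).1 ^ ((i : ℕ) - 1) * (x, y).2 ^ (j : ℕ)))
        = ∑ a : Fin (k + 2), ∑ b : Fin (k + 1),
            ((a : ℕ) + 1 : ℝ) * c₁ a.succ b * x ^ (a : ℕ) * y ^ (b : ℕ) := by
          rw [Fin.sum_univ_succ]
          simp only [Fin.val_zero, Nat.cast_zero, zero_mul, mul_zero, Finset.sum_const_zero,
            zero_add]
          refine Finset.sum_congr rfl fun a _ => Finset.sum_congr rfl fun b _ => ?_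
          simp only [Fin.val_succ, Nat.add_sub_cancel]
          push_cast
          ring
      _ = _ := (Finset.sum_congr rfl fun a _ => (hR a).symm)
  have hBpoly : ∀ x y : ℝ, pdy (Pfn c₂) (x, y)
      = ∑ a : Fin (k + 2), ∑ b : Fin (k + 2),
        (if ha : (a : ℕ) < k + 1 then ((b : ℕ) + 1 : ℝ) * c₂ ⟨(a : ℕ), ha⟩ b.succ else 0)
          * x ^ (a : ℕ) * y ^ (b : ℕ) := by
    intro x y
    have hR : (∑ a : Fin (k + 2), ∑ b : Fin (k + 2),
        (if ha : (a : ℕ) < k + 1 then ((b : ℕ) + 1 : ℝ) * c₂ ⟨(a : ℕ), ha⟩ b.succ else 0)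
          * x ^ (a : ℕ) * y ^ (b : ℕ))
        = ∑ a : Fin (k + 1), ∑ b : Fin (k + 2),
            ((b : ℕ) + 1 : ℝ) * c₂ a b.succ * x ^ (a : ℕ) * y ^ (b : ℕ) := by
      rw [Fin.sum_univ_castSucc]
      simp [Fin.is_lt, Fin.is_le]
    rw [pdy_Pfn, hR]
    refine Finset.sum_congr rfl fun a _ => ?_
    rw [Fin.sum_univ_succ]
    simp only [Fin.val_zero, Nat.cast_zero, zero_mul, mul_zero, Finset.sum_const_zero, zero_add]
    refine Finset.sum_congr rfl fun b _ => ?_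
    simp only [Fin.val_succ, Nat.add_sub_cancel]
    push_cast
    ring
  have hdeq : ∀ x y : ℝ, divg (I v) (x, y)
      = ∑ a : Fin (k + 2), ∑ b : Fin (k + 2), d a b * x ^ (a : ℕ) * y ^ (b : ℕ) := by
    intro x y
    rw [hdivIv (x, y), hApoly x y, hBpoly x y, ← Finset.sum_add_distrib]
    refine Finset.sum_congr rfl fun a _ => ?_
    rw [← Finset.sum_add_distrib]
    refine Finset.sum_congr rfl fun b _ => ?_
    simp only [hd]
    ring
  -- the projection is a polynomial, hence continuous
  obtain ⟨e, helast, he⟩ := hPrmem (divg v)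
  have hPrC : Continuous (Pr (divg v)) := by
    have hpe : Pr (divg v) = Pfn e := by
      funext z; obtain ⟨x, y⟩ := z; rw [Pfn_apply]; exact he x y
    rw [hpe]; exact (contDiff_Pfn e).continuous
  have hq0mem : (fun z : ℝ × ℝ => divg (I v) z - Pr (divg v) z) ∈ ABFdivFun k := by
    refine ⟨fun a b => d a b - e a b, ?_, fun x y => ?_⟩
    · show d (Fin.last (k + 1)) (Fin.last (k + 1)) - e (Fin.last (k + 1)) (Fin.last (k + 1)) = 0
      rw [hdlast, helast, sub_zero]
    show divg (I v) (x, y) - Pr (divg v) (x, y)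
      = ∑ a : Fin (k + 2), ∑ b : Fin (k + 2), (d a b - e a b) * x ^ (a : ℕ) * y ^ (b : ℕ)
    rw [hdeq x y, he x y, ← Finset.sum_sub_distrib]
    refine Finset.sum_congr rfl fun a _ => ?_
    rw [← Finset.sum_sub_distrib]
    exact Finset.sum_congr rfl fun b _ => by ring
  have hDIvcont : Continuous (divg (I v)) := continuous_divg hIvC
  have hDvcont : Continuous (divg v) := continuous_divg hv
  have hq0cont : Continuous (fun z => divg (I v) z - Pr (divg v) z) := hDIvcont.sub hPrC
  have hDcont : Continuous (fun z => divg (I v) z - divg v z) := hDIvcont.sub hDvcont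
  -- div v is in L²
  have hfin : IsFiniteMeasure μK := by
    constructor
    rw [μK, Measure.restrict_apply_univ]
    exact (isCompact_Icc : IsCompact Khat).measure_lt_top
  have hmemv2 : MemLp (divg v) 2 μK := by
    obtain ⟨C, hC⟩ := (isCompact_Icc :
      IsCompact Khat).exists_bound_of_continuousOn hDvcont.continuousOn
    refine MemLp.of_bound hDvcont.aestronglyMeasurable C ?_
    have hae : ∀ᵐ z ∂(volume.restrict Khat), z ∈ Khat :=
      ae_restrict_mem (measurableSet_Icc : MeasurableSet Khat)
    filter_upwards [hae] with z hz using hC z hz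
  -- orthogonality of div(Iv) - div v against all of ABFdivFun
  have horth : ∀ q ∈ ABFdivFun k, ∫ z, (divg (I v) z - divg v z) * q z ∂μK = 0 := by
    rintro q ⟨c, hcl, hcq⟩
    have hqz : ∀ z : ℝ × ℝ, q z
        = ∑ a : Fin (k + 2), ∑ b : Fin (k + 2), c a b * z.1 ^ (a : ℕ) * z.2 ^ (b : ℕ) := by
      intro z; obtain ⟨x, y⟩ := z; exact hcq x y
    have step1 : ∫ z, (divg (I v) z - divg v z) * q z ∂μK
        = ∑ a : Fin (k + 2), ∑ b : Fin (k + 2),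
            c a b * ∫ z, (divg (I v) z - divg v z) * mono (a : ℕ) (b : ℕ) z ∂μK := by
      have hfe : (fun z => (divg (I v) z - divg v z) * q z)
          = fun z => ∑ a : Fin (k + 2), ∑ b : Fin (k + 2),
              c a b * ((divg (I v) z - divg v z) * mono (a : ℕ) (b : ℕ) z) := by
        funext z
        rw [hqz z, Finset.mul_sum]
        refine Finset.sum_congr rfl fun a _ => ?_
        rw [Finset.mul_sum]
        refine Finset.sum_congr rfl fun b _ => ?_
        simp only [mono]
        ring
      rw [hfe, integral_finset_sum _ fun a _ => integrable_finset_sum _ fun b _ =>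
        (integrable_μK (continuous_const.mul (hDcont.mul (contDiff_mono _ _).continuous)) :
          Integrable (fun z => c a b * ((divg (I v) z - divg v z) * mono (a : ℕ) (b : ℕ) z)) μK)]
      refine Finset.sum_congr rfl fun a _ => ?_
      rw [integral_finset_sum _ fun b _ =>
        (integrable_μK (continuous_const.mul (hDcont.mul (contDiff_mono _ _).continuous)) :
          Integrable (fun z => c a b * ((divg (I v) z - divg v z) * mono (a : ℕ) (b : ℕ) z)) μK)]
      refine Finset.sum_congr rfl fun b _ => ?_
      rw [integral_const_mul]
    rw [step1]
    refine Finset.sum_eq_zero fun a _ => Finset.sum_eq_zero fun b _ => ?_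
    by_cases hA : (a : ℕ) = k + 1 <;> by_cases hB : (b : ℕ) = k + 1
    · have ha' : a = Fin.last (k + 1) := Fin.ext (by simpa [Fin.val_last] using hA)
      have hb' : b = Fin.last (k + 1) := Fin.ext (by simpa [Fin.val_last] using hB)
      rw [ha', hb', hcl, zero_mul]
    · have h := hdiv2 ⟨(b : ℕ), by omega⟩
      have hz : ∫ z, (divg (I v) z - divg v z) * mono (a : ℕ) (b : ℕ) z ∂μK = 0 := by
        rw [show mono (a : ℕ) (b : ℕ) = fun z : ℝ × ℝ => z.1 ^ (k + 1) * z.2 ^ (b : ℕ) by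
          rw [hA]; rfl]
        exact h
      rw [hz, mul_zero]
    · have h := hdiv1 ⟨(a : ℕ), by omega⟩
      have hz : ∫ z, (divg (I v) z - divg v z) * mono (a : ℕ) (b : ℕ) z ∂μK = 0 := by
        rw [show mono (a : ℕ) (b : ℕ) = fun z : ℝ × ℝ => z.1 ^ (a : ℕ) * z.2 ^ (k + 1) by
          rw [hB]; rfl]
        exact h
      rw [hz, mul_zero]
    · rw [key (a : ℕ) (b : ℕ) (by omega) (by omega), mul_zero]
  -- final assembly
  have h1 := horth _ hq0mem
  have h2 := hProrth (divg v) hmemv2 _ hq0mem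
  have hq0int : Integrable
      (fun z => (divg (I v) z - Pr (divg v) z) * (divg (I v) z - Pr (divg v) z)) μK :=
    integrable_μK (hq0cont.mul hq0cont)
  have hsum : ∫ z, (divg (I v) z - Pr (divg v) z) * (divg (I v) z - Pr (divg v) z) ∂μK = 0 := by
    have hptw : (fun z => (divg (I v) z - Pr (divg v) z) * (divg (I v) z - Pr (divg v) z))
        = fun z => (divg (I v) z - divg v z) * (divg (I v) z - Pr (divg v) z)
          + (divg v z - Pr (divg v) z) * (divg (I v) z - Pr (divg v) z) :=
      funext fun z => by ring
    have i1 : Integrable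
        (fun z => (divg (I v) z - divg v z) * (divg (I v) z - Pr (divg v) z)) μK :=
      integrable_μK (hDcont.mul hq0cont)
    have i2 : Integrable
        (fun z => (divg v z - Pr (divg v) z) * (divg (I v) z - Pr (divg v) z)) μK :=
      integrable_μK ((hDvcont.sub hPrC).mul hq0cont)
    rw [hptw, integral_add i1 i2, h1, h2, add_zero]
  have hae0 : (fun z => (divg (I v) z - Pr (divg v) z) * (divg (I v) z - Pr (divg v) z))
      =ᵐ[μK] 0 :=
    (integral_eq_zero_iff_of_nonneg (fun z => mul_self_nonneg _) hq0int).mp hsum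
  filter_upwards [hae0] with z hz
  have hz0 : (divg (I v) z - Pr (divg v) z) * (divg (I v) z - Pr (divg v) z) = 0 := hz
  have := mul_self_eq_zero.mp hz0
  linarith
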